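/- Let d and b be positive integers with d ≤ 2^b, and for fixed r ≤ d let S_k denote the set of r-element subsets of {1,...,d} with element sum r(r+1)/2 + k. Then Σ_{k≥1} 2^{-(b+1)k} · #S_k ≤ 2^{-b}. -/

import Mathlib

open Finset

/-- `S k`: the `r`-element subsets of `{1,…,d}` with element sum `r(r+1)/2 + k`. -/
def multiIndexSet (d r k : ℕ) : Finset (Finset ℕ) :=
  ((Finset.Icc 1 d).powersetCard r).filter
    (fun s => ∑ x ∈ s, x = r * (r + 1) / 2 + k)

lemma aux_gauss (m : ℕ) : 2 * ∑ x ∈ Finset.Icc 1 m, x = m * (m + 1) := by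
  induction m with
  | zero => simp
  | succ n ihn =>
    rw [show Finset.Icc 1 (n + 1) = insert (n + 1) (Finset.Icc 1 n) by
      ext x; simp only [mem_insert, mem_Icc]; omega]
    rw [Finset.sum_insert (by simp)]
    nlinarith [ihn]

/-- Gauss bound with equality case: any finset of positive naturals of cardinality `n`
has sum at least `n(n+1)/2`, with equality iff it is `Icc 1 n`. -/
lemma aux_sum_lb (s : Finset ℕ) (h0 : 0 ∉ s) :
    s.card * (s.card + 1) ≤ 2 * ∑ x ∈ s, x ∧
      (2 * ∑ x ∈ s, x = s.card * (s.card + 1) → s = Finset.Icc 1 s.card) := by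
  induction s using Finset.strongInduction with
  | _ s ih =>
    rcases s.eq_empty_or_nonempty with rfl | hne
    · simp
    · set m := s.max' hne with hm
      have hmem : m ∈ s := s.max'_mem hne
      have hsub : s ⊆ Finset.Icc 1 m := by
        intro x hx
        simp only [mem_Icc]
        exact ⟨Nat.one_le_iff_ne_zero.2 (by rintro rfl; exact h0 hx), s.le_max' x hx⟩
      have hcard : s.card ≤ m := by
        calc s.card ≤ (Finset.Icc 1 m).card := card_le_card hsub
        _ = m := by simp
      have h0e : 0 ∉ s.erase m := fun h => h0 (mem_of_mem_erase h)
      have herase := ih (s.erase m) (erase_ssubset hmem) h0e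
      have hce : (s.erase m).card = s.card - 1 := card_erase_of_mem hmem
      have hse : (∑ x ∈ s.erase m, x) + m = ∑ x ∈ s, x := Finset.sum_erase_add _ _ hmem
      have hcpos : 1 ≤ s.card := card_pos.2 hne
      obtain ⟨p, hp⟩ : ∃ p, s.card = p + 1 := ⟨s.card - 1, by omega⟩
      have hce' : (s.erase m).card = p := by omega
      have hlb := herase.1
      rw [hce'] at hlb
      constructor
      · rw [hp]; nlinarith
      · intro heq
        rw [hp] at heq hcard ⊢
        have h1 : 2 * ∑ x ∈ s.erase m, x = p * (p + 1) ∧ m = p + 1 := by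
          constructor <;> nlinarith
        have h2 : s.erase m = Finset.Icc 1 p := by
          have := herase.2 (by rw [hce']; exact h1.1)
          rwa [hce'] at this
        have h3 : s = insert m (s.erase m) := (insert_erase hmem).symm
        rw [h3, h2, h1.2]
        ext x
        simp only [mem_insert, mem_Icc]
        omega

/-- If the sum exceeds the Gauss bound, some element can be decreased. -/
lemma aux_exists (s : Finset ℕ) (h0 : 0 ∉ s)
    (h : s.card * (s.card + 1) < 2 * ∑ x ∈ s, x) :
    ∃ i ∈ s, 2 ≤ i ∧ i - 1 ∉ s := by
  by_contra hc
  push_neg at hc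
  have hne : s.Nonempty := by
    rcases s.eq_empty_or_nonempty with rfl | hne
    · simp at h
    · exact hne
  have hdc : ∀ j, j ∈ s → Finset.Icc 1 j ⊆ s := by
    intro j
    induction j using Nat.strong_induction_on with
    | _ j ih =>
      intro hj x hx
      simp only [mem_Icc] at hx
      rcases eq_or_lt_of_le hx.2 with rfl | hlt
      · exact hj
      · have hx1 : 1 ≤ x := hx.1
        have hj2 : 2 ≤ j := by omega
        have hjm : j - 1 ∈ s := hc j hj hj2
        exact ih (j - 1) (by omega) hjm (mem_Icc.2 ⟨hx.1, by omega⟩)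
  obtain ⟨m, hmmem, hmax⟩ : ∃ m ∈ s, ∀ x ∈ s, x ≤ m :=
    ⟨s.max' hne, s.max'_mem hne, fun x hx => s.le_max' x hx⟩
  have hsub : s ⊆ Finset.Icc 1 m := by
    intro x hx
    simp only [mem_Icc]
    exact ⟨Nat.one_le_iff_ne_zero.2 (by rintro rfl; exact h0 hx), hmax x hx⟩
  have hseq : s = Finset.Icc 1 m := Finset.Subset.antisymm hsub (hdc _ hmmem)
  have hcard : s.card = m := by rw [hseq]; simp
  have hsum : 2 * ∑ x ∈ s, x = m * (m + 1) := by
    rw [hseq]; exact aux_gauss _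
  rw [hcard] at h
  omega

/-- Membership facts for `multiIndexSet`. -/
lemma aux_mem (d r k : ℕ) (s : Finset ℕ) (hs : s ∈ multiIndexSet d r k) :
    s ⊆ Finset.Icc 1 d ∧ s.card = r ∧ ∑ x ∈ s, x = r * (r + 1) / 2 + k := by
  simp only [multiIndexSet, mem_filter, Finset.mem_powersetCard] at hs
  exact ⟨hs.1.1, hs.1.2, hs.2⟩

lemma aux_gauss_even (r : ℕ) : r * (r + 1) / 2 * 2 = r * (r + 1) :=
  Nat.div_mul_cancel (Nat.even_mul_succ_self r).two_dvd

/-- The picked decreasable element. -/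
noncomputable def pickIdx (s : Finset ℕ) : ℕ :=
  WithTop.untopD 0 ((s.filter (fun i => 2 ≤ i ∧ i - 1 ∉ s)).min)

lemma aux_pick (d r k : ℕ) (s : Finset ℕ) (hs : s ∈ multiIndexSet d r (k + 1)) :
    pickIdx s ∈ s ∧ 2 ≤ pickIdx s ∧ pickIdx s - 1 ∉ s := by
  classical
  obtain ⟨hsub, hcard, hsum⟩ := aux_mem d r (k + 1) s hs
  have h0 : 0 ∉ s := fun h => by simpa using hsub h
  have hlt : s.card * (s.card + 1) < 2 * ∑ x ∈ s, x := by
    rw [hcard, hsum]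
    have := aux_gauss_even r
    omega
  obtain ⟨i, his, hi⟩ := aux_exists s h0 hlt
  have hne : (s.filter (fun i => 2 ≤ i ∧ i - 1 ∉ s)).Nonempty :=
    ⟨i, mem_filter.2 ⟨his, hi⟩⟩
  have hpe : pickIdx s = (s.filter (fun i => 2 ≤ i ∧ i - 1 ∉ s)).min' hne := by
    unfold pickIdx
    rw [← Finset.coe_min' hne]
    rfl
  have hpm : pickIdx s ∈ s.filter (fun i => 2 ≤ i ∧ i - 1 ∉ s) := by
    rw [hpe]; exact Finset.min'_mem _ hne
  have := mem_filter.1 hpm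
  exact ⟨this.1, this.2.1, this.2.2⟩

/-- The replacement map lands in `multiIndexSet d r k`. -/
lemma aux_repl_mem (d r k : ℕ) (s : Finset ℕ) (hs : s ∈ multiIndexSet d r (k + 1)) :
    insert (pickIdx s - 1) (s.erase (pickIdx s)) ∈ multiIndexSet d r k := by
  classical
  obtain ⟨hsub, hcard, hsum⟩ := aux_mem d r (k + 1) s hs
  obtain ⟨his, hi2, hi1⟩ := aux_pick d r k s hs
  set i := pickIdx s with hidef
  clear_value i
  have hinote : i - 1 ∉ s.erase i := fun h => hi1 (mem_of_mem_erase h)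
  have hid : i ≤ d := by have := hsub his; simp only [mem_Icc] at this; omega
  simp only [multiIndexSet, mem_filter, Finset.mem_powersetCard]
  refine ⟨⟨?_, ?_⟩, ?_⟩
  · intro x hx
    rcases mem_insert.1 hx with rfl | hx
    · simp only [mem_Icc]; omega
    · exact hsub (mem_of_mem_erase hx)
  · have hr : 1 ≤ s.card := card_pos.2 ⟨i, his⟩
    rw [card_insert_of_notMem hinote, card_erase_of_mem his]
    omega
  · rw [Finset.sum_insert hinote]
    have hse : (∑ x ∈ s.erase i, x) + i = ∑ x ∈ s, x := Finset.sum_erase_add _ _ his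
    omega

/-- The key counting step: `#S_{k+1} ≤ d · #S_k`. -/
lemma aux_step (d r k : ℕ) :
    (multiIndexSet d r (k + 1)).card ≤ d * (multiIndexSet d r k).card := by
  classical
  have key : (multiIndexSet d r (k + 1)).card ≤
      ((multiIndexSet d r k) ×ˢ (Finset.Icc 1 d)).card := by
    apply Finset.card_le_card_of_injOn
      (fun s => (insert (pickIdx s - 1) (s.erase (pickIdx s)), pickIdx s))
    · intro s hs
      obtain ⟨his, hi2, _⟩ := aux_pick d r k s hs
      obtain ⟨hsub, _, _⟩ := aux_mem d r (k + 1) s hs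
      exact Finset.mem_product.2 ⟨aux_repl_mem d r k s hs, hsub his⟩
    · intro s₁ hs₁ s₂ hs₂ heq
      simp only [mem_coe] at hs₁ hs₂
      simp only [Prod.mk.injEq] at heq
      obtain ⟨ht, hieq⟩ := heq
      obtain ⟨his₁, hi2₁, hi1₁⟩ := aux_pick d r k s₁ hs₁
      obtain ⟨his₂, hi2₂, hi1₂⟩ := aux_pick d r k s₂ hs₂
      set i := pickIdx s₁
      rw [← hieq] at his₂ hi1₂ ht
      have h1 : s₁.erase i = s₂.erase i := by
        have e1 : (insert (i - 1) (s₁.erase i)).erase (i - 1) = s₁.erase i :=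
          Finset.erase_insert (fun h => hi1₁ (mem_of_mem_erase h))
        have e2 : (insert (i - 1) (s₂.erase i)).erase (i - 1) = s₂.erase i :=
          Finset.erase_insert (fun h => hi1₂ (mem_of_mem_erase h))
        rw [← e1, ← e2, ht]
      calc s₁ = insert i (s₁.erase i) := (insert_erase his₁).symm
        _ = insert i (s₂.erase i) := by rw [h1]
        _ = s₂ := insert_erase his₂
  calc (multiIndexSet d r (k + 1)).card
      ≤ ((multiIndexSet d r k) ×ˢ (Finset.Icc 1 d)).card := key
    _ = (multiIndexSet d r k).card * d := by rw [Finset.card_product]; simp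
    _ = d * (multiIndexSet d r k).card := by ring

/-- `#S_1 ≤ 1`. -/
lemma aux_S1 (d r : ℕ) (hr1 : 1 ≤ r) : (multiIndexSet d r 1).card ≤ 1 := by
  classical
  rw [Finset.card_le_one]
  suffices H : ∀ s ∈ multiIndexSet d r 1, s = insert (r + 1) (Finset.Icc 1 (r - 1)) by
    intro a ha b hb; rw [H a ha, H b hb]
  intro s hs
  obtain ⟨hsub, hcard, hsum⟩ := aux_mem d r 1 s hs
  obtain ⟨his, hi2, hi1⟩ := aux_pick d r 0 s hs
  set i := pickIdx s with hidef
  clear_value i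
  set t := insert (i - 1) (s.erase i) with ht_def
  have htmem : t ∈ multiIndexSet d r 0 := by
    rw [ht_def, hidef]; exact aux_repl_mem d r 0 s hs
  obtain ⟨htsub, htcard, htsum⟩ := aux_mem d r 0 t htmem
  have h0t : 0 ∉ t := fun h => by simpa using htsub h
  have hteq : t = Finset.Icc 1 r := by
    have := (aux_sum_lb t h0t).2 (by
      rw [htcard, htsum]
      have := aux_gauss_even r
      omega)
    rwa [htcard] at this
  have herase : s.erase i = (Finset.Icc 1 r).erase (i - 1) := by
    have e1 : t.erase (i - 1) = s.erase i :=
      Finset.erase_insert (fun h => hi1 (mem_of_mem_erase h))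
    rw [← hteq, e1]
  have hile : i - 1 ≤ r := by
    have : i - 1 ∈ t := mem_insert_self _ _
    rw [hteq] at this
    simp only [mem_Icc] at this
    omega
  have hige : r + 1 ≤ i := by
    by_contra hcon
    have hir : i ≤ r := by omega
    have : i ∈ (Finset.Icc 1 r).erase (i - 1) := by
      simp only [mem_erase, mem_Icc]
      omega
    rw [← herase] at this
    exact (Finset.notMem_erase i s) this
  have hieq : i = r + 1 := by omega
  have hrec : s = insert i (s.erase i) := (insert_erase his).symm
  rw [hrec, herase, hieq]
  congr 1
  ext x
  simp only [mem_erase, mem_Icc]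
  omega

/-- `#S_{k+1} ≤ d^k`. -/
lemma aux_card_le (d r : ℕ) (hr1 : 1 ≤ r) (k : ℕ) :
    (multiIndexSet d r (k + 1)).card ≤ d ^ k := by
  induction k with
  | zero => simpa using aux_S1 d r hr1
  | succ n ihn =>
    calc (multiIndexSet d r (n + 2)).card ≤ d * (multiIndexSet d r (n + 1)).card :=
          aux_step d r (n + 1)
      _ ≤ d * d ^ n := Nat.mul_le_mul_left d ihn
      _ = d ^ (n + 1) := by ring

/-- If `1 ≤ b` and `d ≤ 2^b` then `∑_{k≥1} 2^{-(b+1)k} #S_k ≤ 2^{-b}`. -/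
theorem multiIndexSet_weighted_sum_le (d r b : ℕ)
    (hb : 1 ≤ b) (hd : d ≤ 2 ^ b) (hr1 : 1 ≤ r) (hrd : r ≤ d) :
    ∑' k : ℕ, (2 : ℝ) ^ (-(((b : ℝ) + 1)) * ((k : ℝ) + 1)) *
        (multiIndexSet d r (k + 1)).card ≤ (2 : ℝ) ^ (-(b : ℝ)) := by
  set f : ℕ → ℝ := fun k => (2 : ℝ) ^ (-(((b : ℝ) + 1)) * ((k : ℝ) + 1)) *
        (multiIndexSet d r (k + 1)).card with hf
  have hcard : ∀ k : ℕ, ((multiIndexSet d r (k + 1)).card : ℝ) ≤ (2 : ℝ) ^ (b * k) := by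
    intro k
    have h1 : (multiIndexSet d r (k + 1)).card ≤ 2 ^ (b * k) := by
      calc (multiIndexSet d r (k + 1)).card ≤ d ^ k := aux_card_le d r hr1 k
        _ ≤ (2 ^ b) ^ k := Nat.pow_le_pow_left hd k
        _ = 2 ^ (b * k) := by rw [← pow_mul]
    exact_mod_cast h1
  have hfg : ∀ k, f k ≤ (2 : ℝ) ^ (-(((b : ℝ) + 1))) * (1 / 2 : ℝ) ^ k := by
    intro k
    have key : (2 : ℝ) ^ (-(((b : ℝ) + 1)) * ((k : ℝ) + 1)) * (2 : ℝ) ^ (((b * k : ℕ) : ℝ))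
        = (2 : ℝ) ^ (-(((b : ℝ) + 1))) * (1 / 2 : ℝ) ^ k := by
      rw [← Real.rpow_add two_pos]
      rw [show ((1 : ℝ) / 2) ^ k = (2 : ℝ) ^ (-(k : ℝ)) by
        rw [Real.rpow_neg two_pos.le, Real.rpow_natCast]
        simp [one_div, inv_pow]]
      rw [← Real.rpow_add two_pos]
      congr 1
      push_cast
      ring
    show (2 : ℝ) ^ (-(((b : ℝ) + 1)) * ((k : ℝ) + 1)) * (multiIndexSet d r (k + 1)).card
        ≤ (2 : ℝ) ^ (-(((b : ℝ) + 1))) * (1 / 2 : ℝ) ^ k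
    rw [← key]
    refine mul_le_mul_of_nonneg_left ?_ (Real.rpow_pos_of_pos two_pos _).le
    rw [Real.rpow_natCast]
    exact hcard k
  have hf0 : ∀ k, 0 ≤ f k :=
    fun k => mul_nonneg (Real.rpow_pos_of_pos two_pos _).le (Nat.cast_nonneg _)
  have hgsum : Summable (fun k : ℕ => (2 : ℝ) ^ (-(((b : ℝ) + 1))) * (1 / 2 : ℝ) ^ k) :=
    (summable_geometric_of_lt_one (by norm_num) (by norm_num)).mul_left _
  have hfsum : Summable f := Summable.of_nonneg_of_le hf0 hfg hgsum
  calc ∑' k, f k ≤ ∑' k : ℕ, (2 : ℝ) ^ (-(((b : ℝ) + 1))) * (1 / 2 : ℝ) ^ k :=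
        Summable.tsum_le_tsum hfg hfsum hgsum
    _ = (2 : ℝ) ^ (-(((b : ℝ) + 1))) * (1 - 1 / 2)⁻¹ := by
        rw [tsum_mul_left, tsum_geometric_of_lt_one (by norm_num) (by norm_num)]
    _ = (2 : ℝ) ^ (-(b : ℝ)) := by
        rw [show ((1 : ℝ) - 1 / 2)⁻¹ = (2 : ℝ) ^ (1 : ℝ) by norm_num]
        rw [← Real.rpow_add two_pos]
        congr 1
        ring
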